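/- Let R := max_{i∈[n]} ‖a_i‖, let μ > 0, let θ̂* ∈ ℝ^d be a unit vector with y_i a_iᵀθ̂* ≥ μ for all i ∈ [n], let γ > 0, and set α := (2 log(2n − 1)/γ + R²)/μ. If θ ∈ ℝ^d is such that y_i a_iᵀθ ≤ 0 for at least one i ∈ [n], then the Normalized LR+GD update θ⁺ := θ − γ β(θ) ∇f(θ) satisfies ‖θ⁺/γ − α θ̂*‖² ≤ ‖θ/γ − α θ̂*‖² − 2αμ + 2 log(2n − 1)/γ + R² = ‖θ/γ − α θ̂*‖² − α μ. -/

import Mathlib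

open scoped RealInnerProductSpace BigOperators

/-- The gradient of the logistic loss `f(θ) = (1/n) Σ_i log(1 + exp(-y_i aᵢᵀθ))`. -/
noncomputable def logisticGrad {d n : ℕ} (a : Fin n → EuclideanSpace ℝ (Fin d))
    (y : Fin n → ℝ) (θ : EuclideanSpace ℝ (Fin d)) : EuclideanSpace ℝ (Fin d) :=
  -(((1 : ℝ) / n) • ∑ i, ((1 + Real.exp (y i * ⟪a i, θ⟫))⁻¹ * y i) • a i)

/-- The normalization factor `β(θ) = ((1/n) Σ_i (1 + exp(y_i aᵢᵀθ))⁻¹)⁻¹`. -/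
noncomputable def logisticBeta {d n : ℕ} (a : Fin n → EuclideanSpace ℝ (Fin d))
    (y : Fin n → ℝ) (θ : EuclideanSpace ℝ (Fin d)) : ℝ :=
  (((1 : ℝ) / n) * ∑ i, (1 + Real.exp (y i * ⟪a i, θ⟫))⁻¹)⁻¹

set_option maxHeartbeats 1000000 in
/-- **One-step decrease for Normalized LR+GD.** With
`α = (2 log(2n − 1)/γ + R²)/μ`, if some sample is misclassified at `θ`, the update
`θ⁺ = θ − γ β(θ) ∇f(θ)` satisfies
`‖θ⁺/γ − α θ̂*‖² ≤ ‖θ/γ − α θ̂*‖² − 2αμ + 2 log(2n − 1)/γ + R² = ‖θ/γ − α θ̂*‖² − αμ`. -/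
theorem normalized_lr_gd_step_decrease {d n : ℕ}
    (a : Fin n → EuclideanSpace ℝ (Fin d)) (y : Fin n → ℝ)
    (hy : ∀ i, y i = 1 ∨ y i = -1)
    (μ R : ℝ) (hμ : 0 < μ)
    (hR : IsGreatest (Set.range fun i => ‖a i‖) R)
    (θstar : EuclideanSpace ℝ (Fin d)) (hstar : ‖θstar‖ = 1)
    (hmargin : ∀ i, μ ≤ y i * ⟪a i, θstar⟫)
    (γ : ℝ) (hγ : 0 < γ)
    (θ : EuclideanSpace ℝ (Fin d))
    (hmis : ∃ i, y i * ⟪a i, θ⟫ ≤ 0) :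
    ‖γ⁻¹ • (θ - (γ * logisticBeta a y θ) • logisticGrad a y θ)
        - ((2 * Real.log (2 * n - 1) / γ + R ^ 2) / μ) • θstar‖ ^ 2
      ≤ ‖γ⁻¹ • θ - ((2 * Real.log (2 * n - 1) / γ + R ^ 2) / μ) • θstar‖ ^ 2
        - 2 * ((2 * Real.log (2 * n - 1) / γ + R ^ 2) / μ) * μ
        + 2 * Real.log (2 * n - 1) / γ + R ^ 2 ∧
    ‖γ⁻¹ • θ - ((2 * Real.log (2 * n - 1) / γ + R ^ 2) / μ) • θstar‖ ^ 2
        - 2 * ((2 * Real.log (2 * n - 1) / γ + R ^ 2) / μ) * μ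
        + 2 * Real.log (2 * n - 1) / γ + R ^ 2
      = ‖γ⁻¹ • θ - ((2 * Real.log (2 * n - 1) / γ + R ^ 2) / μ) • θstar‖ ^ 2
        - ((2 * Real.log (2 * n - 1) / γ + R ^ 2) / μ) * μ := by
  obtain ⟨j, hj⟩ := hmis
  have hn : 0 < n := j.pos
  have hn1 : (1 : ℝ) ≤ (n : ℝ) := by exact_mod_cast hn
  set L : ℝ := Real.log (2 * n - 1) with hL
  set A : ℝ := (2 * L / γ + R ^ 2) / μ with hA
  set z : Fin n → ℝ := fun i => y i * ⟪a i, θ⟫ with hz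
  set w : Fin n → ℝ := fun i => (1 + Real.exp (z i))⁻¹ with hw
  have hwpos : ∀ i, 0 < w i := fun i => inv_pos.2 (by positivity)
  have hwle : ∀ i, w i ≤ 1 := by
    intro i
    rw [hw]
    have h1 : (1 : ℝ) ≤ 1 + Real.exp (z i) := le_add_of_nonneg_right (Real.exp_pos _).le
    simpa using inv_le_one_of_one_le₀ h1
  set W : ℝ := ∑ i, w i with hW
  have hWpos : 0 < W := Finset.sum_pos (fun i _ => hwpos i) ⟨j, Finset.mem_univ j⟩
  have hWhalf : (2 : ℝ)⁻¹ ≤ W := by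
    have hwj : (2 : ℝ)⁻¹ ≤ w j := by
      rw [hw]
      have : Real.exp (z j) ≤ 1 := Real.exp_le_one_iff.2 hj
      have h2 : (1 : ℝ) + Real.exp (z j) ≤ 2 := by linarith
      have := one_div_le_one_div_of_le (by positivity) h2
      simpa [one_div] using this
    calc (2 : ℝ)⁻¹ ≤ w j := hwj
      _ ≤ W := Finset.single_le_sum (fun i _ => (hwpos i).le) (Finset.mem_univ j)
  have hWn : W ≤ n := by
    calc W ≤ ∑ _i : Fin n, (1 : ℝ) := Finset.sum_le_sum fun i _ => hwle i
      _ = n := by simp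
  have h2n1 : (1 : ℝ) ≤ 2 * n - 1 := by linarith
  have hLpos : 0 ≤ L := Real.log_nonneg h2n1
  have hR0 : 0 ≤ R := by
    obtain ⟨i0, hi0⟩ := hR.1
    rw [← hi0]; positivity
  have hA0 : 0 ≤ A := by
    rw [hA]; positivity
  -- Jensen's inequality step
  have key1 : ∑ i, (w i / W) * z i ≤ L := by
    have hjen := (strictConcaveOn_log_Ioi.concaveOn).le_map_sum
      (t := Finset.univ) (w := fun i => w i / W) (p := fun i => Real.exp (z i))
      (fun i _ => by positivity) (by
        rw [← Finset.sum_div, ← hW, div_self hWpos.ne'])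
      (fun i _ => Real.exp_pos _)
    simp only [smul_eq_mul, Real.log_exp] at hjen
    have hsum : ∑ i, (w i / W) * Real.exp (z i) = (n - W) / W := by
      have : ∀ i, (w i / W) * Real.exp (z i) = (1 - w i) / W := by
        intro i
        have h0 : (0 : ℝ) < 1 + Real.exp (z i) := by positivity
        rw [hw]
        field_simp; ring
      rw [Finset.sum_congr rfl fun i _ => this i, ← Finset.sum_div]
      congr 1
      rw [Finset.sum_sub_distrib, ← hW]
      simp
    have hpos : (0 : ℝ) < (n - W) / W := by
      have : W < n := lt_of_lt_of_le (by
        calc W = ∑ i, w i := hW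
          _ < ∑ _i : Fin n, (1 : ℝ) := by
            refine Finset.sum_lt_sum (fun i _ => hwle i) ⟨j, Finset.mem_univ j, ?_⟩
            rw [hw]
            have h1 : (1 : ℝ) < 1 + Real.exp (z j) := lt_add_of_pos_right _ (Real.exp_pos _)
            exact inv_lt_one_of_one_lt₀ h1
          _ = n := by simp) le_rfl
      exact div_pos (by linarith) hWpos
    have hbound : (n - W) / W ≤ 2 * n - 1 := by
      rw [div_le_iff₀ hWpos]
      nlinarith
    calc ∑ i, (w i / W) * z i ≤ Real.log (∑ i, (w i / W) * Real.exp (z i)) := hjen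
      _ = Real.log ((n - W) / W) := by rw [hsum]
      _ ≤ L := Real.log_le_log hpos hbound
  -- the displacement vector
  set S : EuclideanSpace ℝ (Fin d) := ∑ i, (w i * y i) • a i with hS
  set s : EuclideanSpace ℝ (Fin d) := W⁻¹ • S with hs
  have hβ : logisticBeta a y θ = ((1 / (n : ℝ)) * W)⁻¹ := rfl
  have hg : logisticGrad a y θ = -(((1 : ℝ) / n) • S) := rfl
  have hvec : γ⁻¹ • (θ - (γ * logisticBeta a y θ) • logisticGrad a y θ) - A • θstar
      = (γ⁻¹ • θ - A • θstar) + s := by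
    rw [hβ, hg, hs]
    have hnne : (n : ℝ) ≠ 0 := by positivity
    match_scalars <;> (field_simp; try ring)
  -- inner product bounds
  have hip_theta : ⟪s, θ⟫ ≤ L := by
    have : ⟪s, θ⟫ = ∑ i, (w i / W) * z i := by
      rw [hs, real_inner_smul_left, hS, sum_inner]
      rw [Finset.mul_sum]
      refine Finset.sum_congr rfl fun i _ => ?_
      rw [real_inner_smul_left, hz]
      ring
    rw [this]; exact key1
  have hip_star : μ ≤ ⟪s, θstar⟫ := by
    have hexp : ⟪s, θstar⟫ = W⁻¹ * ∑ i, w i * (y i * ⟪a i, θstar⟫) := by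
      rw [hs, real_inner_smul_left, hS, sum_inner]
      congr 1
      refine Finset.sum_congr rfl fun i _ => ?_
      rw [real_inner_smul_left]
      ring
    rw [hexp]
    have h1 : W * μ ≤ ∑ i, w i * (y i * ⟪a i, θstar⟫) := by
      rw [hW, Finset.sum_mul]
      exact Finset.sum_le_sum fun i _ =>
        mul_le_mul_of_nonneg_left (hmargin i) (hwpos i).le
    calc μ = W⁻¹ * (W * μ) := by field_simp
      _ ≤ W⁻¹ * ∑ i, w i * (y i * ⟪a i, θstar⟫) :=
        mul_le_mul_of_nonneg_left h1 (inv_pos.2 hWpos).le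
  have hnorm_s : ‖s‖ ≤ R := by
    have hSn : ‖S‖ ≤ W * R := by
      rw [hS]
      calc ‖∑ i, (w i * y i) • a i‖ ≤ ∑ i, ‖(w i * y i) • a i‖ :=
            norm_sum_le _ _
        _ ≤ ∑ i, w i * R := by
            refine Finset.sum_le_sum fun i _ => ?_
            rw [norm_smul]
            have hyi : |y i| = 1 := by rcases hy i with h | h <;> simp [h]
            have hai : ‖a i‖ ≤ R := hR.2 ⟨i, rfl⟩
            rw [Real.norm_eq_abs, abs_mul, hyi, abs_of_pos (hwpos i), mul_one]
            exact mul_le_mul_of_nonneg_left hai (hwpos i).le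
        _ = W * R := by rw [hW, ← Finset.sum_mul]
    rw [hs, norm_smul, Real.norm_eq_abs, abs_of_pos (inv_pos.2 hWpos)]
    calc W⁻¹ * ‖S‖ ≤ W⁻¹ * (W * R) :=
          mul_le_mul_of_nonneg_left hSn (inv_pos.2 hWpos).le
      _ = R := by field_simp
  -- put it together
  have hAμ : A * μ = 2 * L / γ + R ^ 2 := div_mul_cancel₀ _ hμ.ne'
  constructor
  · rw [hvec, norm_add_sq_real, mul_div_assoc]
    have hinner : ⟪γ⁻¹ • θ - A • θstar, s⟫ ≤ L / γ - A * μ := by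
      have h0 : γ⁻¹ * L = L / γ := (div_eq_inv_mul L γ).symm
      rw [inner_sub_left, real_inner_smul_left, real_inner_smul_left]
      have h1 : γ⁻¹ * ⟪θ, s⟫ ≤ γ⁻¹ * L := by
        rw [real_inner_comm]
        exact mul_le_mul_of_nonneg_left hip_theta (inv_pos.2 hγ).le
      have h2 : A * μ ≤ A * ⟪θstar, s⟫ := by
        rw [real_inner_comm]
        exact mul_le_mul_of_nonneg_left hip_star hA0
      linarith
    have hs2 : ‖s‖ ^ 2 ≤ R ^ 2 := by
      exact pow_le_pow_left₀ (norm_nonneg s) hnorm_s 2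
    have hgoal : 2 * (L / γ) = 2 * L / γ := (mul_div_assoc 2 L γ).symm
    linarith [hinner, hs2]
  · linarith [hAμ]
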